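/- Randomized Integer-Division hashing modulo 2^L is never pairwise independent: if B is odd, then for any prefix β of length n-2 and distinct symbols a, b, the n-grams w_1 = βaa and w_2 = βbb satisfy P(h(w_1) = h(w_2)) ≥ 2/4^L · 2^L = 1/2^{L-1}; pairwise independence would require collision probability exactly 1/2^L. -/

import Mathlib

open MeasureTheory

/-- Randomized Integer-Division hashing modulo `2^L` with `B` odd is never pairwise
independent: for any prefix `β` and distinct symbols `a ≠ b`, the `n`-grams `βaa` and `βbb`
collide with probability at least `1/2^{L-1}` (pairwise independence would require
collision probability exactly `1/2^L`). -/
theorem stmt_8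
    {Ω : Type*} [MeasurableSpace Ω] (μ : Measure Ω) [IsProbabilityMeasure μ]
    {A : Type*} (k L : ℕ) (hL : 2 ≤ L) (B : ℕ) (hB : Odd B)
    (h₁ : Ω → A → ZMod (2 ^ L))
    (hmeas : ∀ (c : A) (r : ZMod (2 ^ L)), MeasurableSet {ω | h₁ ω c = r})
    (hunif : ∀ (c : A) (r : ZMod (2 ^ L)), μ {ω | h₁ ω c = r} = 1 / 2 ^ L)
    (hind : ProbabilityTheory.iIndepFun (m := fun _ : A => (⊤ : MeasurableSpace (ZMod (2 ^ L))))
      (fun c ω => h₁ ω c) μ)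
    (β : Fin k → A) (a b : A) (hab : a ≠ b) :
    1 / 2 ^ (L - 1) ≤
      μ {ω | (∑ i : Fin (k + 2), (B : ZMod (2 ^ L)) ^ (i : ℕ) * h₁ ω (Fin.append β ![a, a] i))
           = (∑ i : Fin (k + 2), (B : ZMod (2 ^ L)) ^ (i : ℕ) * h₁ ω (Fin.append β ![b, b] i))} := by
  have h2L : (2:ℕ)^L ≠ 0 := by positivity
  haveI : NeZero ((2:ℕ)^L) := ⟨h2L⟩
  -- the shifted value
  set c₀ : ZMod (2^L) := ((2^(L-1) : ℕ) : ZMod (2^L)) with hc₀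
  have hc₀ne : c₀ ≠ 0 := by
    rw [hc₀, Ne, ZMod.natCast_eq_zero_iff]
    rw [Nat.pow_dvd_pow_iff_le_right (by norm_num : 1 < 2)]
    omega
  have hkey : ((1 + B : ℕ) : ZMod (2^L)) * c₀ = 0 := by
    obtain ⟨m, hm⟩ := hB
    rw [hc₀, ← Nat.cast_mul, ZMod.natCast_eq_zero_iff, hm]
    have : (1 + (2*m+1)) * 2^(L-1) = (m+1) * 2^L := by
      have : 2^L = 2 * 2^(L-1) := by
        conv_lhs => rw [show L = 1 + (L-1) by omega]
        ring
      rw [this]; ring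
    rw [this]
    exact dvd_mul_left _ _
  -- union decomposition of the difference event
  have hdecomp : ∀ c : ZMod (2^L), {ω | h₁ ω a - h₁ ω b = c}
      = ⋃ r : ZMod (2^L), ({ω | h₁ ω a = r} ∩ {ω | h₁ ω b = r - c}) := by
    intro c
    ext ω
    simp only [Set.mem_setOf_eq, Set.mem_iUnion, Set.mem_inter_iff]
    constructor
    · intro h
      exact ⟨h₁ ω a, rfl, by rw [← h]; ring⟩
    · rintro ⟨r, h1, h2⟩
      rw [h1, h2]; ring
  have hdm : ∀ c : ZMod (2^L), MeasurableSet {ω | h₁ ω a - h₁ ω b = c} := by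
    intro c
    rw [hdecomp]
    exact MeasurableSet.iUnion fun r => (hmeas a r).inter (hmeas b _)
  -- probability of the difference event
  have hindab := hind.indepFun hab
  have hprob : ∀ c : ZMod (2^L), μ {ω | h₁ ω a - h₁ ω b = c} = 1 / 2^L := by
    intro c
    rw [hdecomp]
    rw [measure_iUnion ?_ (fun r => (hmeas a r).inter (hmeas b _))]
    · have hterm : ∀ r : ZMod (2^L),
          μ ({ω | h₁ ω a = r} ∩ {ω | h₁ ω b = r - c}) = (1/2^L) * (1/2^L) := by
        intro r
        have := hindab.measure_inter_preimage_eq_mul {r} {r - c}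
          trivial trivial
        simpa [Set.preimage, hunif] using this
      rw [tsum_fintype]
      simp only [hterm, Finset.sum_const, Finset.card_univ, ZMod.card]
      have h2 : (2:ENNReal)^L ≠ 0 := by positivity
      have h2t : (2:ENNReal)^L ≠ ⊤ := by
        exact ENNReal.pow_ne_top (by norm_num)
      rw [nsmul_eq_mul]
      push_cast
      rw [one_div, ← mul_assoc, ENNReal.mul_inv_cancel h2 h2t, one_mul]
    · intro r s hrs
      simp only [Function.onFun, Set.disjoint_left]
      rintro ω ⟨h1, -⟩ ⟨h2, -⟩
      exact hrs (by rw [← h1, ← h2])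
  -- the good event is contained in the collision event
  have hsub : {ω | h₁ ω a - h₁ ω b = 0} ∪ {ω | h₁ ω a - h₁ ω b = c₀} ⊆
      {ω | (∑ i : Fin (k + 2), (B : ZMod (2 ^ L)) ^ (i : ℕ) * h₁ ω (Fin.append β ![a, a] i))
           = (∑ i : Fin (k + 2), (B : ZMod (2 ^ L)) ^ (i : ℕ) * h₁ ω (Fin.append β ![b, b] i))} := by
    intro ω hω
    have hmul : ((1:ZMod (2^L)) + B) * (h₁ ω a - h₁ ω b) = 0 := by
      rcases hω with hω | hω
      · rw [Set.mem_setOf_eq] at hω; rw [hω, mul_zero]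
      · rw [Set.mem_setOf_eq] at hω; rw [hω]
        have := hkey
        push_cast at this
        exact this
    show _ = _
    rw [Fin.sum_univ_add, Fin.sum_univ_add]
    simp only [Fin.append_left, Fin.append_right, Fin.sum_univ_two,
      Fin.coe_castAdd, Fin.coe_natAdd, Matrix.cons_val_zero, Matrix.cons_val_one,
      Matrix.head_cons, Fin.val_zero, Fin.val_one, Nat.add_zero]
    linear_combination ((B:ZMod (2^L))^k) * hmul
  -- conclude
  have hdisj : Disjoint {ω | h₁ ω a - h₁ ω b = 0} {ω | h₁ ω a - h₁ ω b = c₀} := by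
    rw [Set.disjoint_left]
    rintro ω h1 h2
    exact hc₀ne (by rw [Set.mem_setOf_eq] at h1 h2; rw [← h1, h2])
  calc (1:ENNReal) / 2 ^ (L - 1)
      = μ ({ω | h₁ ω a - h₁ ω b = 0} ∪ {ω | h₁ ω a - h₁ ω b = c₀}) := by
        rw [measure_union hdisj (hdm c₀), hprob, hprob]
        rw [ENNReal.div_add_div_same]
        have : (2:ENNReal)^L = 2^(L-1) * 2 := by
          rw [← pow_succ]
          congr 1
          omega
        rw [this]
        have hc : (2:ENNReal)^(L-1) ≠ 0 := by positivity
        have hc' : (2:ENNReal)^(L-1) ≠ ⊤ := ENNReal.pow_ne_top (by norm_num)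
        have hd : (2:ENNReal)^(L-1)*2 ≠ 0 := mul_ne_zero hc (by norm_num)
        have hd' : (2:ENNReal)^(L-1)*2 ≠ ⊤ := ENNReal.mul_ne_top hc' (by norm_num)
        rw [ENNReal.div_eq_div_iff hd hd' hc hc']
        ring
    _ ≤ _ := measure_mono hsub
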